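/- arXiv:2501.14609 — 3 statements merged into one kernel-verified Lean document; each statement's English description precedes it below -/
import Mathlib

section
/- Let m ≥ 1, let Λ > 0, and let v be a real-valued function on subsets of {1, …, m} with marginal values at most Λ, i.e., |v(S ∪ {g}) − v(S)| ≤ Λ for every S ⊆ {1, …, m} and every g ∈ {1, …, m}. Let V be the multilinear extension of v. Then V is Λ-Lipschitz on [0,1]^m with respect to the ℓ1 norm: for all x, y ∈ [0,1]^m, |V(y) − V(x)| ≤ Λ · Σ_{j=1}^m |y_j − x_j|. -/
open Finset

/-- The multilinear extension of a set function `v` on subsets of `Fin m`: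
`V(x) = Σ_{T ⊆ [m]} (∏_{j ∈ T} x_j)(∏_{j ∉ T} (1 - x_j)) v(T)`. -/
noncomputable def mle (m : ℕ) (v : Finset (Fin m) → ℝ) (x : Fin m → ℝ) : ℝ :=
  ∑ T : Finset (Fin m), (∏ j ∈ T, x j) * (∏ j ∈ Tᶜ, (1 - x j)) * v T

lemma sum_pair_aux (m : ℕ) (j : Fin m) (f : Finset (Fin m) → ℝ) :
    ∑ T : Finset (Fin m), f T
      = ∑ T ∈ univ.filter (fun T : Finset (Fin m) => j ∉ T), (f (insert j T) + f T) := by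
  rw [Finset.sum_add_distrib]
  rw [← Finset.sum_filter_add_sum_filter_not univ (fun T => j ∈ T) f]
  congr 1
  refine Finset.sum_nbij' (fun T => T.erase j) (fun T => insert j T) ?_ ?_ ?_ ?_ ?_
  · intro T hT; simp at hT ⊢
  · intro T hT; simp at hT ⊢
  · intro T hT; simp at hT; exact Finset.insert_erase hT
  · intro T hT; simp at hT; exact Finset.erase_insert hT
  · intro T hT; simp at hT; rw [Finset.insert_erase hT]

lemma prod_update_of_notMem_aux (m : ℕ) (x : Fin m → ℝ) (j : Fin m) (c : ℝ)
    (T : Finset (Fin m)) (hj : j ∉ T) :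
    ∏ i ∈ T, Function.update x j c i = ∏ i ∈ T, x i :=
  Finset.prod_congr rfl fun i hi => Function.update_of_ne (by rintro rfl; exact hj hi) _ _

lemma prod_one_sub_update_aux (m : ℕ) (x : Fin m → ℝ) (j : Fin m) (c : ℝ)
    (S : Finset (Fin m)) (hj : j ∈ S) :
    ∏ i ∈ S, (1 - Function.update x j c i)
      = (1 - c) * ∏ i ∈ S.erase j, (1 - x i) := by
  rw [← Finset.mul_prod_erase S _ hj, Function.update_self]
  congr 1
  exact Finset.prod_congr rfl fun i hi =>
    by rw [Function.update_of_ne (Finset.ne_of_mem_erase hi)]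

lemma mle_update_sub (m : ℕ) (v : Finset (Fin m) → ℝ) (x : Fin m → ℝ) (j : Fin m) (a b : ℝ) :
    mle m v (Function.update x j a) - mle m v (Function.update x j b)
      = (a - b) * ∑ T ∈ univ.filter (fun T : Finset (Fin m) => j ∉ T),
          ((∏ i ∈ T, x i) * (∏ i ∈ Tᶜ.erase j, (1 - x i))) * (v (insert j T) - v T) := by
  unfold mle
  rw [← Finset.sum_sub_distrib, Finset.mul_sum]
  rw [sum_pair_aux m j (fun T => (∏ i ∈ T, Function.update x j a i) * (∏ i ∈ Tᶜ, (1 - Function.update x j a i)) * v T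
      - (∏ i ∈ T, Function.update x j b i) * (∏ i ∈ Tᶜ, (1 - Function.update x j b i)) * v T)]
  refine Finset.sum_congr rfl fun T hT => ?_
  simp only [Finset.mem_filter] at hT
  obtain ⟨-, hjT⟩ := hT
  have hjc : j ∈ Tᶜ := Finset.mem_compl.mpr hjT
  have hins : (insert j T)ᶜ = Tᶜ.erase j := Finset.compl_insert
  have hjce : j ∉ Tᶜ.erase j := Finset.notMem_erase _ _
  rw [hins]
  rw [Finset.prod_insert hjT, Finset.prod_insert hjT]
  rw [Function.update_self, Function.update_self]
  rw [prod_update_of_notMem_aux m x j a T hjT, prod_update_of_notMem_aux m x j b T hjT]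
  have he : ∀ c : ℝ, ∏ i ∈ Tᶜ.erase j, (1 - Function.update x j c i) = ∏ i ∈ Tᶜ.erase j, (1 - x i) := by
    intro c
    exact Finset.prod_congr rfl fun i hi => by
      rw [Function.update_of_ne (Finset.ne_of_mem_erase hi)]
  rw [he a, he b, prod_one_sub_update_aux m x j a Tᶜ hjc, prod_one_sub_update_aux m x j b Tᶜ hjc]
  ring

lemma D_bound (m : ℕ) (v : Finset (Fin m) → ℝ) (Λ : ℝ)
    (hmarg : ∀ (S : Finset (Fin m)) (g : Fin m), |v (insert g S) - v S| ≤ Λ)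
    (x : Fin m → ℝ) (hx : ∀ i, x i ∈ Set.Icc (0 : ℝ) 1) (j : Fin m) :
    |∑ T ∈ univ.filter (fun T : Finset (Fin m) => j ∉ T),
        ((∏ i ∈ T, x i) * (∏ i ∈ Tᶜ.erase j, (1 - x i))) * (v (insert j T) - v T)| ≤ Λ := by
  have hw0 : ∀ T : Finset (Fin m), 0 ≤ (∏ i ∈ T, x i) * (∏ i ∈ Tᶜ.erase j, (1 - x i)) := by
    intro T
    exact mul_nonneg (Finset.prod_nonneg fun i _ => (hx i).1)
      (Finset.prod_nonneg fun i _ => by linarith [(hx i).2])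
  calc |∑ T ∈ univ.filter (fun T : Finset (Fin m) => j ∉ T),
        ((∏ i ∈ T, x i) * (∏ i ∈ Tᶜ.erase j, (1 - x i))) * (v (insert j T) - v T)|
      ≤ ∑ T ∈ univ.filter (fun T : Finset (Fin m) => j ∉ T),
        |((∏ i ∈ T, x i) * (∏ i ∈ Tᶜ.erase j, (1 - x i))) * (v (insert j T) - v T)| :=
        Finset.abs_sum_le_sum_abs _ _
    _ ≤ ∑ T ∈ univ.filter (fun T : Finset (Fin m) => j ∉ T),
        ((∏ i ∈ T, x i) * (∏ i ∈ Tᶜ.erase j, (1 - x i))) * Λ := by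
        refine Finset.sum_le_sum fun T _ => ?_
        rw [abs_mul, abs_of_nonneg (hw0 T)]
        exact mul_le_mul_of_nonneg_left (hmarg T j) (hw0 T)
    _ = Λ := by
        rw [← Finset.sum_mul]
        have hset : (univ.filter (fun T : Finset (Fin m) => j ∉ T))
            = ((univ : Finset (Fin m)).erase j).powerset := by
          ext T
          simp [Finset.subset_erase]
        have hcompl : ∀ T ∈ ((univ : Finset (Fin m)).erase j).powerset,
            (∏ i ∈ T, x i) * (∏ i ∈ Tᶜ.erase j, (1 - x i))
              = (∏ i ∈ T, x i) * (∏ i ∈ ((univ : Finset (Fin m)).erase j) \ T, (1 - x i)) := by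
          intro T hT
          congr 1
          apply Finset.prod_congr _ fun _ _ => rfl
          ext i
          simp only [Finset.mem_erase, Finset.mem_compl, Finset.mem_sdiff, Finset.mem_univ,
            and_true, true_and]
        rw [hset, Finset.sum_congr rfl hcompl, ← Finset.prod_add]
        simp

/-- **The multilinear extension is `Λ`-Lipschitz in the ℓ1 norm on `[0,1]^m`**
whenever the underlying set function `v` has marginal values at most `Λ`. -/
theorem stmt_6 (m : ℕ) (hm : 1 ≤ m) (Λ : ℝ) (hΛ : 0 < Λ)
    (v : Finset (Fin m) → ℝ)
    (hmarg : ∀ (S : Finset (Fin m)) (g : Fin m), |v (insert g S) - v S| ≤ Λ)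
    (x y : Fin m → ℝ)
    (hx : ∀ j, x j ∈ Set.Icc (0 : ℝ) 1) (hy : ∀ j, y j ∈ Set.Icc (0 : ℝ) 1) :
    |mle m v y - mle m v x| ≤ Λ * ∑ j, |y j - x j| := by
  classical
  have hm' : 0 < m := hm
  set jf : ℕ → Fin m := fun k => ⟨k % m, Nat.mod_lt k hm'⟩ with hjf
  set z : ℕ → Fin m → ℝ := fun k j => if (j : ℕ) < k then y j else x j with hz
  have hzIcc : ∀ k i, z k i ∈ Set.Icc (0 : ℝ) 1 := by
    intro k i
    by_cases h : (i : ℕ) < k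
    · simpa [hz, h] using hy i
    · simpa [hz, h] using hx i
  have hz0 : z 0 = x := by funext i; simp [hz]
  have hzm : z m = y := by funext i; simp [hz, i.isLt]
  have hstep : ∀ k, k < m →
      z (k + 1) = Function.update (z k) (jf k) (y (jf k)) ∧
      z k = Function.update (z k) (jf k) (x (jf k)) := by
    intro k hk
    have hjk : ((jf k : Fin m) : ℕ) = k := Nat.mod_eq_of_lt hk
    constructor
    · funext i
      rcases eq_or_ne i (jf k) with h | h
      · subst h
        rw [Function.update_self]
        show (if ((jf k : Fin m) : ℕ) < k + 1 then y (jf k) else x (jf k)) = y (jf k)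
        rw [if_pos (by omega)]
      · rw [Function.update_of_ne h]
        have hik : (i : ℕ) ≠ k := fun hik => h (Fin.ext (by omega))
        show (if (i : ℕ) < k + 1 then y i else x i) = (if (i : ℕ) < k then y i else x i)
        by_cases h1 : (i : ℕ) < k
        · rw [if_pos (by omega), if_pos h1]
        · rw [if_neg (by omega), if_neg h1]
    · funext i
      rcases eq_or_ne i (jf k) with h | h
      · subst h
        rw [Function.update_self]
        show (if ((jf k : Fin m) : ℕ) < k then y (jf k) else x (jf k)) = x (jf k)
        rw [if_neg (by omega)]
      · rw [Function.update_of_ne h]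
  have key : mle m v y - mle m v x
      = ∑ k ∈ Finset.range m, (mle m v (z (k + 1)) - mle m v (z k)) := by
    rw [Finset.sum_range_sub (f := fun k => mle m v (z k)), hz0, hzm]
  rw [key]
  calc |∑ k ∈ Finset.range m, (mle m v (z (k + 1)) - mle m v (z k))|
      ≤ ∑ k ∈ Finset.range m, |mle m v (z (k + 1)) - mle m v (z k)| :=
        Finset.abs_sum_le_sum_abs _ _
    _ ≤ ∑ k ∈ Finset.range m, Λ * |y (jf k) - x (jf k)| := by
        refine Finset.sum_le_sum fun k hk => ?_
        have hk' := Finset.mem_range.mp hk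
        obtain ⟨h1, h2⟩ := hstep k hk'
        have e2 : mle m v (z k) = mle m v (Function.update (z k) (jf k) (x (jf k))) := by
          rw [← h2]
        rw [h1, e2, mle_update_sub, abs_mul, mul_comm]
        exact mul_le_mul_of_nonneg_right
          (D_bound m v Λ hmarg (z k) (hzIcc k) (jf k)) (abs_nonneg _)
    _ = Λ * ∑ j, |y j - x j| := by
        rw [Finset.mul_sum]
        rw [← Fin.sum_univ_eq_sum_range (fun n => Λ * |y (jf n) - x (jf n)|) m]
        refine Finset.sum_congr rfl fun i _ => ?_
        have hi : jf (i : ℕ) = i := Fin.ext (Nat.mod_eq_of_lt i.isLt)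
        rw [hi]
end

section
/- Let m ≥ 1, let Λ > 0, and let v be a real-valued function on subsets of {1, …, m} that is nonnegative (v(S) ≥ 0 for all S) and has marginal values at most Λ (|v(S ∪ {g}) − v(S)| ≤ Λ for all S and g). Let V be the multilinear extension of v, let b_k(ℓ, r) = m · max(0, min(r, k/m) − max(ℓ, (k−1)/m)) for k ∈ {1, …, m}, and define the cake valuation f by f ℓ r = V(b_1(ℓ, r), …, b_m(ℓ, r)) for 0 ≤ ℓ ≤ r ≤ 1. Then f is nonnegative (f ℓ r ≥ 0 for all 0 ≤ ℓ ≤ r ≤ 1) and (mΛ)-Lipschitz: |f ℓ r − f ℓ' r'| ≤ mΛ (|ℓ − ℓ'| + |r − r'|) for all 0 ≤ ℓ ≤ r ≤ 1 and 0 ≤ ℓ' ≤ r' ≤ 1. -/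
/-- The `k`-th component of the `CakeConstruction` map: `m` times the length
of `[ℓ, r] ∩ [(k-1)/m, k/m]`. -/
noncomputable def bcomp (m k : ℕ) (ℓ r : ℝ) : ℝ :=
  (m : ℝ) * max 0 (min r ((k : ℝ) / m) - max ℓ (((k : ℝ) - 1) / m))

open Finset


lemma prod_comp_update_mem {m : ℕ} (F : ℝ → ℝ) (x : Fin m → ℝ) (j : Fin m) (t : ℝ)
    {T : Finset (Fin m)} (hj : j ∈ T) :
    ∏ i ∈ T, F (Function.update x j t i) = F t * ∏ i ∈ T.erase j, F (x i) := by
  rw [← Finset.mul_prod_erase T _ hj, Function.update_self]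
  congr 1
  exact Finset.prod_congr rfl fun i hi => by
    rw [Function.update_of_ne (Finset.ne_of_mem_erase hi)]

lemma prod_comp_update_not_mem {m : ℕ} (F : ℝ → ℝ) (x : Fin m → ℝ) (j : Fin m) (t : ℝ)
    {T : Finset (Fin m)} (hj : j ∉ T) :
    ∏ i ∈ T, F (Function.update x j t i) = ∏ i ∈ T, F (x i) :=
  Finset.prod_congr rfl fun i hi => by
    rw [Function.update_of_ne (by rintro rfl; exact hj hi)]

lemma mle_update (m : ℕ) (v : Finset (Fin m) → ℝ) (x : Fin m → ℝ) (j : Fin m) (t : ℝ) :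
    mle m v (Function.update x j t) =
      (1 - t) * mle m v (Function.update x j 0) + t * mle m v (Function.update x j 1) := by
  unfold mle
  rw [Finset.mul_sum, Finset.mul_sum, ← Finset.sum_add_distrib]
  refine Finset.sum_congr rfl fun T _ => ?_
  by_cases hj : j ∈ T
  · have hjc : j ∉ Tᶜ := by simp [hj]
    simp only [prod_comp_update_mem (fun a => a) x j _ hj,
      prod_comp_update_not_mem (fun a => 1 - a) x j _ hjc]
    ring
  · have hjc : j ∈ Tᶜ := by simp [hj]
    simp only [prod_comp_update_not_mem (fun a => a) x j _ hj,
      prod_comp_update_mem (fun a => 1 - a) x j _ hjc]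
    ring

lemma mle_slope (m : ℕ) (Λ : ℝ) (v : Finset (Fin m) → ℝ)
    (hmarg : ∀ S g, |v (insert g S) - v S| ≤ Λ)
    (x : Fin m → ℝ) (h0 : ∀ i, 0 ≤ x i) (h1 : ∀ i, x i ≤ 1) (j : Fin m) :
    |mle m v (Function.update x j 1) - mle m v (Function.update x j 0)| ≤ Λ := by
  classical
  set E : Finset (Fin m) := (univ : Finset (Fin m)).erase j with hE
  set W : Finset (Fin m) → ℝ := fun S => (∏ i ∈ S, x i) * ∏ i ∈ E \ S, (1 - x i) with hWdef
  have hcompl : ∀ {T : Finset (Fin m)}, j ∈ T → Tᶜ = E \ T.erase j := by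
    intro T hj; ext i
    simp only [Finset.mem_compl, Finset.mem_sdiff, Finset.mem_erase, hE, Finset.mem_univ,
      and_true, true_and]
    constructor
    · intro h; exact ⟨fun he => h (he ▸ hj), fun hc => h hc.2⟩
    · rintro ⟨hij, h2⟩ hiT; exact h2 ⟨hij, hiT⟩
  have hcompl' : ∀ {T : Finset (Fin m)}, j ∉ T → Tᶜ.erase j = E \ T := by
    intro T hj; ext i
    simp only [Finset.mem_erase, Finset.mem_compl, Finset.mem_sdiff, hE, Finset.mem_univ,
      and_true, true_and]
  have A : mle m v (Function.update x j 1) = ∑ S ∈ E.powerset, W S * v (insert j S) := by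
    unfold mle
    have step : ∀ T : Finset (Fin m),
        (∏ i ∈ T, Function.update x j 1 i) * (∏ i ∈ Tᶜ, (1 - Function.update x j 1 i)) * v T
        = if j ∈ T then ((∏ i ∈ T.erase j, x i) * ∏ i ∈ Tᶜ, (1 - x i)) * v T else 0 := by
      intro T
      by_cases hj : j ∈ T
      · rw [if_pos hj, prod_comp_update_mem (fun a => a) x j _ hj,
          prod_comp_update_not_mem (fun a => 1 - a) x j _ (by simp [hj])]
        ring
      · rw [if_neg hj, prod_comp_update_not_mem (fun a => a) x j _ hj,
          prod_comp_update_mem (fun a => 1 - a) x j _ (by simp [hj])]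
        ring
    simp only [step]
    rw [Finset.sum_ite, Finset.sum_const_zero, add_zero]
    refine Finset.sum_nbij' (fun T => T.erase j) (fun S => insert j S) ?_ ?_ ?_ ?_ ?_
    · intro T hT
      simp only [Finset.mem_powerset, hE]
      exact Finset.erase_subset_erase j (Finset.subset_univ T)
    · intro S hS
      simp only [Finset.mem_filter, Finset.mem_univ, true_and]
      exact Finset.mem_insert_self j S
    · intro T hT
      exact Finset.insert_erase (Finset.mem_filter.1 hT).2
    · intro S hS
      refine Finset.erase_insert fun hjS => ?_
      have := Finset.mem_powerset.1 hS hjS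
      simp [hE] at this
    · intro T hT
      have hj : j ∈ T := (Finset.mem_filter.1 hT).2
      rw [hWdef]
      simp only
      rw [← hcompl hj, Finset.insert_erase hj]
  have B : mle m v (Function.update x j 0) = ∑ S ∈ E.powerset, W S * v S := by
    unfold mle
    have step : ∀ T : Finset (Fin m),
        (∏ i ∈ T, Function.update x j 0 i) * (∏ i ∈ Tᶜ, (1 - Function.update x j 0 i)) * v T
        = if j ∈ T then 0 else ((∏ i ∈ T, x i) * ∏ i ∈ Tᶜ.erase j, (1 - x i)) * v T := by
      intro T
      by_cases hj : j ∈ T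
      · rw [if_pos hj, prod_comp_update_mem (fun a => a) x j _ hj,
          prod_comp_update_not_mem (fun a => 1 - a) x j _ (by simp [hj])]
        ring
      · rw [if_neg hj, prod_comp_update_not_mem (fun a => a) x j _ hj,
          prod_comp_update_mem (fun a => 1 - a) x j _ (by simp [hj])]
        ring
    simp only [step]
    rw [Finset.sum_ite, Finset.sum_const_zero, zero_add]
    refine Finset.sum_nbij' (fun T => T) (fun S => S) ?_ ?_ ?_ ?_ ?_
    · intro T hT
      have hj : j ∉ T := (Finset.mem_filter.1 hT).2
      simp only [Finset.mem_powerset, hE]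
      intro i hi
      exact Finset.mem_erase.2 ⟨fun h => hj (h ▸ hi), Finset.mem_univ i⟩
    · intro S hS
      simp only [Finset.mem_filter, Finset.mem_univ, true_and]
      intro hjS
      have := Finset.mem_powerset.1 hS hjS
      simp [hE] at this
    · intro T _; rfl
    · intro S _; rfl
    · intro T hT
      have hj : j ∉ T := (Finset.mem_filter.1 hT).2
      rw [hWdef]
      simp only
      rw [← hcompl' hj]
  have hWnn : ∀ S ∈ E.powerset, 0 ≤ W S := by
    intro S _
    exact mul_nonneg (Finset.prod_nonneg fun i _ => h0 i)
      (Finset.prod_nonneg fun i _ => by linarith [h1 i])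
  have hWsum : ∑ S ∈ E.powerset, W S = 1 := by
    rw [hWdef]
    rw [← Finset.prod_add]
    exact Finset.prod_eq_one fun i _ => by ring
  rw [A, B, ← Finset.sum_sub_distrib]
  have : ∀ S ∈ E.powerset, W S * v (insert j S) - W S * v S = W S * (v (insert j S) - v S) := by
    intro S _; ring
  rw [Finset.sum_congr rfl this]
  calc |∑ S ∈ E.powerset, W S * (v (insert j S) - v S)|
      ≤ ∑ S ∈ E.powerset, |W S * (v (insert j S) - v S)| := Finset.abs_sum_le_sum_abs _ _
    _ ≤ ∑ S ∈ E.powerset, W S * Λ := by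
        refine Finset.sum_le_sum fun S hS => ?_
        rw [abs_mul, abs_of_nonneg (hWnn S hS)]
        exact mul_le_mul_of_nonneg_left (hmarg S j) (hWnn S hS)
    _ = Λ := by rw [← Finset.sum_mul, hWsum, one_mul]

lemma mle_update_diff (m : ℕ) (Λ : ℝ) (v : Finset (Fin m) → ℝ)
    (hmarg : ∀ S g, |v (insert g S) - v S| ≤ Λ)
    (w : Fin m → ℝ) (hw0 : ∀ i, 0 ≤ w i) (hw1 : ∀ i, w i ≤ 1) (j : Fin m) (t s : ℝ) :
    |mle m v (Function.update w j t) - mle m v (Function.update w j s)| ≤ Λ * |t - s| := by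
  rw [mle_update m v w j t, mle_update m v w j s]
  have hring : (1 - t) * mle m v (Function.update w j 0) + t * mle m v (Function.update w j 1)
      - ((1 - s) * mle m v (Function.update w j 0) + s * mle m v (Function.update w j 1))
      = (t - s) * (mle m v (Function.update w j 1) - mle m v (Function.update w j 0)) := by
    ring
  rw [hring, abs_mul, mul_comm]
  exact mul_le_mul_of_nonneg_right (mle_slope m Λ v hmarg w hw0 hw1 j) (abs_nonneg _)

lemma mle_lipschitz (m : ℕ) (Λ : ℝ) (v : Finset (Fin m) → ℝ)
    (hmarg : ∀ S g, |v (insert g S) - v S| ≤ Λ)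
    (x y : Fin m → ℝ) (hx0 : ∀ i, 0 ≤ x i) (hx1 : ∀ i, x i ≤ 1)
    (hy0 : ∀ i, 0 ≤ y i) (hy1 : ∀ i, y i ≤ 1) :
    |mle m v x - mle m v y| ≤ Λ * ∑ i, |x i - y i| := by
  classical
  set z : Finset (Fin m) → (Fin m → ℝ) := fun s i => if i ∈ s then y i else x i with hz
  have key : ∀ s : Finset (Fin m), |mle m v x - mle m v (z s)| ≤ Λ * ∑ i ∈ s, |x i - y i| := by
    intro s
    induction s using Finset.induction_on with
    | empty =>
      have hze : z ∅ = x := funext fun i => by simp [hz]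
      rw [hze]
      simp
    | @insert a s hj ih =>
      have hw0 : ∀ i, 0 ≤ z s i := fun i => by by_cases h : i ∈ s <;> simp [hz, h, hx0 i, hy0 i]
      have hw1 : ∀ i, z s i ≤ 1 := fun i => by by_cases h : i ∈ s <;> simp [hz, h, hx1 i, hy1 i]
      have h1 : z (insert a s) = Function.update (z s) a (y a) := by
        funext i
        by_cases h : i = a
        · subst h; simp [hz]
        · simp [hz, Function.update_of_ne h, h]
      have h2 : z s = Function.update (z s) a (x a) := by
        funext i
        by_cases h : i = a
        · subst h; simp [hz, hj]
        · simp [Function.update_of_ne h]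
      have tri : |mle m v x - mle m v (z (insert a s))| ≤
          |mle m v x - mle m v (z s)| + |mle m v (z s) - mle m v (z (insert a s))| :=
        abs_sub_le _ _ _
      have step : |mle m v (z s) - mle m v (z (insert a s))| ≤ Λ * |x a - y a| := by
        calc |mle m v (z s) - mle m v (z (insert a s))|
            = |mle m v (Function.update (z s) a (x a)) -
                mle m v (Function.update (z s) a (y a))| := by rw [← h1, ← h2]
          _ ≤ Λ * |x a - y a| := mle_update_diff m Λ v hmarg (z s) hw0 hw1 a (x a) (y a)
      rw [Finset.sum_insert hj, mul_add]
      linarith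
  have hzu : z Finset.univ = y := funext fun i => by simp [hz]
  have := key Finset.univ
  rwa [hzu] at this

lemma clampC (ℓ r s t : ℝ) (hst : s ≤ t) :
    max 0 (min r t - max ℓ s) = max ℓ (min r t) - max ℓ (min r s) := by
  simp only [max_def, min_def]
  split_ifs <;> linarith

lemma clampF (ℓ ℓ' r s t : ℝ) (hll : ℓ ≤ ℓ') (hst : s ≤ t) :
    max ℓ (min r s) - max ℓ' (min r s) ≤ max ℓ (min r t) - max ℓ' (min r t) := by
  simp only [max_def, min_def]; split_ifs <;> linarith

lemma clampFlb (ℓ ℓ' u : ℝ) (hll : ℓ ≤ ℓ') :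
    ℓ - ℓ' ≤ max ℓ u - max ℓ' u := by
  simp only [max_def]; split_ifs <;> linarith

lemma clampFub (ℓ ℓ' u : ℝ) (hll : ℓ ≤ ℓ') :
    max ℓ u - max ℓ' u ≤ 0 := by
  simp only [max_def]; split_ifs <;> linarith

lemma clampG (ℓ r r' s t : ℝ) (hrr : r ≤ r') (hst : s ≤ t) :
    max ℓ (min r' s) - max ℓ (min r s) ≤ max ℓ (min r' t) - max ℓ (min r t) := by
  simp only [max_def, min_def]; split_ifs <;> linarith

lemma clampGlb (ℓ r r' u : ℝ) (hrr : r ≤ r') :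
    0 ≤ max ℓ (min r' u) - max ℓ (min r u) := by
  simp only [max_def, min_def]; split_ifs <;> linarith

lemma clampGub (ℓ r r' u : ℝ) (hrr : r ≤ r') :
    max ℓ (min r' u) - max ℓ (min r u) ≤ r' - r := by
  simp only [max_def, min_def]; split_ifs <;> linarith

lemma bcomp_eq (m k : ℕ) (ℓ r : ℝ) :
    bcomp m (k + 1) ℓ r =
      (m : ℝ) * (max ℓ (min r (((k : ℝ) + 1) / m)) - max ℓ (min r ((k : ℝ) / m))) := by
  unfold bcomp
  push_cast
  rw [show ((k : ℝ) + 1 - 1) / m = (k : ℝ) / m by ring]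
  rcases Nat.eq_zero_or_pos m with hm | hm
  · subst hm; norm_num
  · have hm' : (0:ℝ) < m := by exact_mod_cast hm
    rw [clampC ℓ r ((k : ℝ) / m) (((k : ℝ) + 1) / m) (by gcongr <;> linarith)]

lemma bcomp_nonneg (m k : ℕ) (ℓ r : ℝ) : 0 ≤ bcomp m k ℓ r :=
  mul_nonneg (Nat.cast_nonneg m) (le_max_left 0 _)

lemma bcomp_le_one (m k : ℕ) (hm : 1 ≤ m) (ℓ r : ℝ) : bcomp m k ℓ r ≤ 1 := by
  have hmpos : (0:ℝ) < m := by exact_mod_cast hm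
  unfold bcomp
  have key : max 0 (min r ((k : ℝ) / m) - max ℓ (((k : ℝ) - 1) / m)) ≤ (m:ℝ)⁻¹ := by
    apply max_le (by positivity)
    have h1 : min r ((k : ℝ) / m) ≤ (k : ℝ) / m := min_le_right _ _
    have h2 : ((k : ℝ) - 1) / m ≤ max ℓ (((k : ℝ) - 1) / m) := le_max_right _ _
    have h3 : (k : ℝ) / m - ((k : ℝ) - 1) / m = (m : ℝ)⁻¹ := by field_simp; ring
    linarith
  calc (m:ℝ) * max 0 (min r ((k : ℝ) / m) - max ℓ (((k : ℝ) - 1) / m))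
      ≤ (m:ℝ) * (m:ℝ)⁻¹ := mul_le_mul_of_nonneg_left key (le_of_lt hmpos)
    _ = 1 := mul_inv_cancel₀ (ne_of_gt hmpos)

lemma sum_abs_bcomp_left (m : ℕ) (ℓ ℓ' r : ℝ) (h : ℓ ≤ ℓ') :
    ∑ k ∈ Finset.range m, |bcomp m (k+1) ℓ r - bcomp m (k+1) ℓ' r| ≤ (m:ℝ) * (ℓ' - ℓ) := by
  rcases Nat.eq_zero_or_pos m with hm | hm
  · subst hm; simp
  have hm' : (0:ℝ) < m := by exact_mod_cast hm
  set g : ℕ → ℝ := fun k => max ℓ (min r ((k:ℝ)/m)) - max ℓ' (min r ((k:ℝ)/m)) with hg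
  have hmono : ∀ k : ℕ, g k ≤ g (k+1) := by
    intro k
    show g k ≤ g (k+1)
    simp only [hg]
    push_cast
    apply clampF ℓ ℓ' r ((k:ℝ)/m) (((k:ℝ)+1)/m) h
    gcongr
    linarith
  have hterm : ∀ k : ℕ, |bcomp m (k+1) ℓ r - bcomp m (k+1) ℓ' r| = (m:ℝ) * (g (k+1) - g k) := by
    intro k
    rw [bcomp_eq m k ℓ r, bcomp_eq m k ℓ' r]
    have : (m:ℝ) * (max ℓ (min r (((k:ℝ) + 1) / m)) - max ℓ (min r ((k:ℝ) / m)))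
        - (m:ℝ) * (max ℓ' (min r (((k:ℝ) + 1) / m)) - max ℓ' (min r ((k:ℝ) / m)))
        = (m:ℝ) * (g (k+1) - g k) := by
      simp only [hg]
      push_cast
      ring
    rw [this, abs_of_nonneg]
    exact mul_nonneg hm'.le (by linarith [hmono k])
  calc ∑ k ∈ Finset.range m, |bcomp m (k+1) ℓ r - bcomp m (k+1) ℓ' r|
      = ∑ k ∈ Finset.range m, (m:ℝ) * (g (k+1) - g k) := Finset.sum_congr rfl fun k _ => hterm k
    _ = (m:ℝ) * (g m - g 0) := by rw [← Finset.mul_sum, Finset.sum_range_sub]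
    _ ≤ (m:ℝ) * (ℓ' - ℓ) := by
        apply mul_le_mul_of_nonneg_left _ (le_of_lt hm')
        have h1 : g m ≤ 0 := clampFub ℓ ℓ' _ h
        have h2 : ℓ - ℓ' ≤ g 0 := clampFlb ℓ ℓ' _ h
        linarith

lemma sum_abs_bcomp_right (m : ℕ) (ℓ r r' : ℝ) (h : r ≤ r') :
    ∑ k ∈ Finset.range m, |bcomp m (k+1) ℓ r - bcomp m (k+1) ℓ r'| ≤ (m:ℝ) * (r' - r) := by
  rcases Nat.eq_zero_or_pos m with hm | hm
  · subst hm; simp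
  have hm' : (0:ℝ) < m := by exact_mod_cast hm
  set g : ℕ → ℝ := fun k => max ℓ (min r' ((k:ℝ)/m)) - max ℓ (min r ((k:ℝ)/m)) with hg
  have hmono : ∀ k : ℕ, g k ≤ g (k+1) := by
    intro k
    show g k ≤ g (k+1)
    simp only [hg]
    push_cast
    apply clampG ℓ r r' ((k:ℝ)/m) (((k:ℝ)+1)/m) h
    gcongr
    linarith
  have hterm : ∀ k : ℕ, |bcomp m (k+1) ℓ r - bcomp m (k+1) ℓ r'| = (m:ℝ) * (g (k+1) - g k) := by
    intro k
    rw [bcomp_eq m k ℓ r, bcomp_eq m k ℓ r']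
    have : (m:ℝ) * (max ℓ (min r (((k:ℝ) + 1) / m)) - max ℓ (min r ((k:ℝ) / m)))
        - (m:ℝ) * (max ℓ (min r' (((k:ℝ) + 1) / m)) - max ℓ (min r' ((k:ℝ) / m)))
        = -((m:ℝ) * (g (k+1) - g k)) := by
      simp only [hg]
      push_cast
      ring
    rw [this, abs_neg, abs_of_nonneg]
    exact mul_nonneg hm'.le (by linarith [hmono k])
  calc ∑ k ∈ Finset.range m, |bcomp m (k+1) ℓ r - bcomp m (k+1) ℓ r'|
      = ∑ k ∈ Finset.range m, (m:ℝ) * (g (k+1) - g k) := Finset.sum_congr rfl fun k _ => hterm k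
    _ = (m:ℝ) * (g m - g 0) := by rw [← Finset.mul_sum, Finset.sum_range_sub]
    _ ≤ (m:ℝ) * (r' - r) := by
        apply mul_le_mul_of_nonneg_left _ (le_of_lt hm')
        have h1 : g m ≤ r' - r := clampGub ℓ r r' _ h
        have h2 : 0 ≤ g 0 := clampGlb ℓ r r' _ h
        linarith

lemma sum_abs_bcomp_left' (m : ℕ) (ℓ ℓ' r : ℝ) :
    ∑ k ∈ Finset.range m, |bcomp m (k+1) ℓ r - bcomp m (k+1) ℓ' r| ≤ (m:ℝ) * |ℓ - ℓ'| := by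
  rcases le_total ℓ ℓ' with h | h
  · rw [abs_sub_comm, abs_of_nonneg (by linarith)]
    exact sum_abs_bcomp_left m ℓ ℓ' r h
  · rw [abs_of_nonneg (by linarith)]
    calc ∑ k ∈ Finset.range m, |bcomp m (k+1) ℓ r - bcomp m (k+1) ℓ' r|
        = ∑ k ∈ Finset.range m, |bcomp m (k+1) ℓ' r - bcomp m (k+1) ℓ r| := by
          exact Finset.sum_congr rfl fun k _ => abs_sub_comm _ _
      _ ≤ (m:ℝ) * (ℓ - ℓ') := sum_abs_bcomp_left m ℓ' ℓ r h

lemma sum_abs_bcomp_right' (m : ℕ) (ℓ r r' : ℝ) :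
    ∑ k ∈ Finset.range m, |bcomp m (k+1) ℓ r - bcomp m (k+1) ℓ r'| ≤ (m:ℝ) * |r - r'| := by
  rcases le_total r r' with h | h
  · rw [abs_sub_comm, abs_of_nonneg (by linarith)]
    exact sum_abs_bcomp_right m ℓ r r' h
  · rw [abs_of_nonneg (by linarith)]
    calc ∑ k ∈ Finset.range m, |bcomp m (k+1) ℓ r - bcomp m (k+1) ℓ r'|
        = ∑ k ∈ Finset.range m, |bcomp m (k+1) ℓ r' - bcomp m (k+1) ℓ r| := by
          exact Finset.sum_congr rfl fun k _ => abs_sub_comm _ _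
      _ ≤ (m:ℝ) * (r - r') := sum_abs_bcomp_right m ℓ r' r h

lemma sum_abs_bcomp (m : ℕ) (ℓ r ℓ' r' : ℝ) :
    ∑ k ∈ Finset.range m, |bcomp m (k+1) ℓ r - bcomp m (k+1) ℓ' r'| ≤
      (m:ℝ) * (|ℓ - ℓ'| + |r - r'|) := by
  calc ∑ k ∈ Finset.range m, |bcomp m (k+1) ℓ r - bcomp m (k+1) ℓ' r'|
      ≤ ∑ k ∈ Finset.range m,
          (|bcomp m (k+1) ℓ r - bcomp m (k+1) ℓ' r| +
           |bcomp m (k+1) ℓ' r - bcomp m (k+1) ℓ' r'|) :=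
        Finset.sum_le_sum fun k _ => abs_sub_le _ _ _
    _ = (∑ k ∈ Finset.range m, |bcomp m (k+1) ℓ r - bcomp m (k+1) ℓ' r|) +
        ∑ k ∈ Finset.range m, |bcomp m (k+1) ℓ' r - bcomp m (k+1) ℓ' r'| :=
        Finset.sum_add_distrib
    _ ≤ (m:ℝ) * |ℓ - ℓ'| + (m:ℝ) * |r - r'| :=
        add_le_add (sum_abs_bcomp_left' m ℓ ℓ' r) (sum_abs_bcomp_right' m ℓ' r r')
    _ = (m:ℝ) * (|ℓ - ℓ'| + |r - r'|) := by ring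


/-- **The cake valuation `f = V ∘ b` built by `CakeConstruction` from a
nonnegative valuation `v` with marginal values at most `Λ` is nonnegative
on intervals and `(mΛ)`-Lipschitz.** -/
theorem stmt_8 (m : ℕ) (hm : 1 ≤ m) (Λ : ℝ) (hΛ : 0 < Λ)
    (v : Finset (Fin m) → ℝ)
    (hnonneg : ∀ S, 0 ≤ v S)
    (hmarg : ∀ (S : Finset (Fin m)) (g : Fin m), |v (insert g S) - v S| ≤ Λ)
    (f : ℝ → ℝ → ℝ)
    (hf : ∀ ℓ r : ℝ, 0 ≤ ℓ → ℓ ≤ r → r ≤ 1 →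
      f ℓ r = mle m v (fun k : Fin m => bcomp m (k.val + 1) ℓ r)) :
    (∀ ℓ r : ℝ, 0 ≤ ℓ → ℓ ≤ r → r ≤ 1 → 0 ≤ f ℓ r) ∧
    (∀ ℓ r ℓ' r' : ℝ, 0 ≤ ℓ → ℓ ≤ r → r ≤ 1 → 0 ≤ ℓ' → ℓ' ≤ r' → r' ≤ 1 →
      |f ℓ r - f ℓ' r'| ≤ (m : ℝ) * Λ * (|ℓ - ℓ'| + |r - r'|)) := by
  have hx0 : ∀ (ℓ r : ℝ) (k : Fin m), 0 ≤ bcomp m (k.val + 1) ℓ r :=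
    fun ℓ r k => bcomp_nonneg m _ ℓ r
  have hx1 : ∀ (ℓ r : ℝ) (k : Fin m), bcomp m (k.val + 1) ℓ r ≤ 1 :=
    fun ℓ r k => bcomp_le_one m _ hm ℓ r
  constructor
  · intro ℓ r h0 h1 h2
    rw [hf ℓ r h0 h1 h2]
    unfold mle
    apply Finset.sum_nonneg
    intro T _
    exact mul_nonneg (mul_nonneg (Finset.prod_nonneg fun i _ => hx0 ℓ r i)
      (Finset.prod_nonneg fun i _ => by linarith [hx1 ℓ r i])) (hnonneg T)
  · intro ℓ r ℓ' r' h0 h1 h2 h0' h1' h2'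
    rw [hf ℓ r h0 h1 h2, hf ℓ' r' h0' h1' h2']
    calc |mle m v (fun k : Fin m => bcomp m (k.val + 1) ℓ r) -
            mle m v (fun k : Fin m => bcomp m (k.val + 1) ℓ' r')|
        ≤ Λ * ∑ i : Fin m, |bcomp m (i.val + 1) ℓ r - bcomp m (i.val + 1) ℓ' r'| :=
          mle_lipschitz m Λ v hmarg _ _ (hx0 ℓ r) (hx1 ℓ r) (hx0 ℓ' r') (hx1 ℓ' r')
      _ ≤ Λ * ((m:ℝ) * (|ℓ - ℓ'| + |r - r'|)) := by
          apply mul_le_mul_of_nonneg_left _ hΛ.le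
          rw [Fin.sum_univ_eq_sum_range
            (fun k => |bcomp m (k + 1) ℓ r - bcomp m (k + 1) ℓ' r'|) m]
          exact sum_abs_bcomp m ℓ r ℓ' r'
      _ = (m : ℝ) * Λ * (|ℓ - ℓ'| + |r - r'|) := by ring
end

section
/- Let m ≥ 2, Λ ≥ 1, and n ≥ 1 with 5n ≤ m. For each i ∈ {1, …, n}, let f_i : ℝ → ℝ → ℝ be a cake valuation that is nonnegative, normalized (f_i x x = 0), and (mΛ)-Lipschitz, and define f̂_i ℓ r = f_i ℓ r + β(r − ℓ) with β(x) = min(mΛx, 4Λ + 1). Let 0 = e_0 ≤ e_1 ≤ … ≤ e_n = 1 be a contiguous division such that |f̂_i e_{i-1} e_i − f̂_j e_{j-1} e_j| ≤ 1/(8mΛ) for all i, j ∈ {1, …, n}. Then for every i ∈ {1, …, n}, the interval length satisfies e_i − e_{i-1} ≥ 2/m + 1/(2Λm²). -/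
/-- **Length lower bound for approximately equitable divisions of the padded
valuations.** If `m ≥ 2`, `Λ ≥ 1`, `5n ≤ m`, each `f i` is nonnegative,
normalized and `(mΛ)`-Lipschitz, `f̂ i ℓ r = f i ℓ r + min(mΛ(r-ℓ), 4Λ+1)`,
and the contiguous division `0 = e 0 ≤ ⋯ ≤ e n = 1` is equitable for the
`f̂ i` within `1/(8mΛ)`, then every interval has length at least
`2/m + 1/(2Λm²)`. -/
theorem stmt_10 (m n : ℕ) (hm : 2 ≤ m) (hn : 1 ≤ n) (hnm : 5 * n ≤ m)
    (Λ : ℝ) (hΛ : 1 ≤ Λ) (f : Fin n → ℝ → ℝ → ℝ)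
    (hnonneg : ∀ i, ∀ ℓ r : ℝ, 0 ≤ ℓ → ℓ ≤ r → r ≤ 1 → 0 ≤ f i ℓ r)
    (hnorm : ∀ i, ∀ x ∈ Set.Icc (0 : ℝ) 1, f i x x = 0)
    (hlip : ∀ i, ∀ ℓ r ℓ' r' : ℝ, 0 ≤ ℓ → ℓ ≤ r → r ≤ 1 →
      0 ≤ ℓ' → ℓ' ≤ r' → r' ≤ 1 →
      |f i ℓ r - f i ℓ' r'| ≤ (m : ℝ) * Λ * (|ℓ - ℓ'| + |r - r'|))
    (fhat : Fin n → ℝ → ℝ → ℝ)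
    (hfhat : ∀ i, ∀ ℓ r : ℝ,
      fhat i ℓ r = f i ℓ r + min ((m : ℝ) * Λ * (r - ℓ)) (4 * Λ + 1))
    (e : ℕ → ℝ) (he0 : e 0 = 0) (hen : e n = 1)
    (hmono : ∀ i < n, e i ≤ e (i + 1))
    (heq : ∀ i j : Fin n,
      |fhat i (e i.val) (e (i.val + 1)) - fhat j (e j.val) (e (j.val + 1))|
        ≤ 1 / (8 * m * Λ)) :
    ∀ i : Fin n,
      2 / (m : ℝ) + 1 / (2 * Λ * (m : ℝ) ^ 2) ≤ e (i.val + 1) - e i.val := by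
  intro i
  have hM2 : (2:ℝ) ≤ (m:ℝ) := by exact_mod_cast hm
  have hMpos : (0:ℝ) < (m:ℝ) := by linarith
  have hΛpos : (0:ℝ) < Λ := by linarith
  have hN1 : (1:ℝ) ≤ (n:ℝ) := by exact_mod_cast hn
  -- monotonicity up to n
  have hle : ∀ k l, k ≤ l → l ≤ n → e k ≤ e l := by
    intro k l hkl
    induction l, hkl using Nat.le_induction with
    | base => intro _; exact le_rfl
    | succ l hkl ih =>
      intro hln
      exact le_trans (ih (by omega)) (hmono l (by omega))
  have hbound : ∀ k, k ≤ n → 0 ≤ e k ∧ e k ≤ 1 := by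
    intro k hk
    constructor
    · have := hle 0 k (Nat.zero_le _) hk; rwa [he0] at this
    · have := hle k n hk le_rfl; rwa [hen] at this
  -- a long interval exists
  have hsum : ∑ k ∈ Finset.range n, (e (k+1) - e k) = 1 := by
    rw [Finset.sum_range_sub, he0, hen]; ring
  have hsum' : ∑ k ∈ Finset.range n, (1/(n:ℝ)) ≤
      ∑ k ∈ Finset.range n, (e (k+1) - e k) := by
    rw [hsum, Finset.sum_const, Finset.card_range, nsmul_eq_mul, mul_one_div,
      div_self (by positivity)]
  obtain ⟨j, hjmem, hj⟩ := Finset.exists_le_of_sum_le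
    ⟨0, Finset.mem_range.mpr (by omega)⟩ hsum'
  have hjn : j < n := Finset.mem_range.mp hjmem
  have hbj0 := hbound j hjn.le
  have hbj1 := hbound (j+1) hjn
  -- long interval has padded value ≥ 4Λ+1
  have hfj : (4*Λ+1) ≤ fhat ⟨j, hjn⟩ (e j) (e (j+1)) := by
    rw [hfhat]
    have h1 : 0 ≤ f ⟨j, hjn⟩ (e j) (e (j+1)) :=
      hnonneg _ _ _ hbj0.1 (hmono j hjn) hbj1.2
    have h2 : 4*Λ+1 ≤ min ((m:ℝ) * Λ * (e (j+1) - e j)) (4*Λ+1) := by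
      refine le_min ?_ le_rfl
      have h5n : (5:ℝ) * (n:ℝ) ≤ (m:ℝ) := by exact_mod_cast hnm
      have hstep : (m:ℝ) * Λ * (1/(n:ℝ)) ≤ (m:ℝ) * Λ * (e (j+1) - e j) :=
        mul_le_mul_of_nonneg_left hj (by positivity)
      have h5 : 5 * Λ ≤ (m:ℝ) * Λ * (1/(n:ℝ)) := by
        rw [mul_one_div, le_div_iff₀ (by linarith)]
        nlinarith
      nlinarith
    linarith
  -- bounds for interval i
  have hiv : i.val < n := i.isLt
  have hbi0 := hbound i.val hiv.le
  have hbi1 := hbound (i.val+1) hiv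
  have hmi : e i.val ≤ e (i.val+1) := hmono i.val hiv
  -- upper bound on padded value of interval i
  have hup : fhat i (e i.val) (e (i.val+1)) ≤
      2 * (m:ℝ) * Λ * (e (i.val+1) - e i.val) := by
    rw [hfhat]
    have hf0 : f i (e i.val) (e i.val) = 0 := hnorm i _ ⟨hbi0.1, hbi0.2⟩
    have hl := hlip i (e i.val) (e (i.val+1)) (e i.val) (e i.val)
      hbi0.1 hmi hbi1.2 hbi0.1 le_rfl hbi0.2
    rw [hf0, sub_zero, sub_self, abs_zero, zero_add,
      abs_of_nonneg (sub_nonneg.mpr hmi)] at hl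
    have h1 : f i (e i.val) (e (i.val+1)) ≤ (m:ℝ) * Λ * (e (i.val+1) - e i.val) :=
      le_trans (le_abs_self _) hl
    have h2 : min ((m:ℝ) * Λ * (e (i.val+1) - e i.val)) (4*Λ+1) ≤
        (m:ℝ) * Λ * (e (i.val+1) - e i.val) := min_le_left _ _
    linarith
  -- equitability
  have heqi := heq i ⟨j, hjn⟩
  have habs := abs_le.mp heqi
  have hkey : 4*Λ + 1 - 1/(8*(m:ℝ)*Λ) ≤
      2 * (m:ℝ) * Λ * (e (i.val+1) - e i.val) := by
    have : fhat ⟨j, hjn⟩ (e j) (e (j+1)) - 1/(8*(m:ℝ)*Λ) ≤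
        fhat i (e i.val) (e (i.val+1)) := by linarith [habs.1]
    linarith
  -- finish
  have h1M : 1/(m:ℝ) ≤ 1/2 := one_div_le_one_div_of_le (by norm_num) hM2
  have h16 : (16:ℝ) ≤ 8*(m:ℝ)*Λ := by nlinarith
  have hε : 1/(8*(m:ℝ)*Λ) ≤ 1/16 := one_div_le_one_div_of_le (by norm_num) h16
  rw [show 2/(m:ℝ) + 1/(2*Λ*(m:ℝ)^2) = (4*Λ + 1/(m:ℝ))/(2*(m:ℝ)*Λ) by
    field_simp; ring, div_le_iff₀ (by positivity)]
  nlinarith [hkey, h1M, hε]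
end
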